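/- For every positive integers $n \ge 1$ and $\omega \ge 1$, the graph $C_{\lceil \log_2 n \rceil} \boxtimes K_\omega$ is universal for the class of $n$-vertex interval graphs with clique number at most $\omega$; that is, every $n$-vertex interval graph with clique number at most $\omega$ is isomorphic to a subgraph of $C_{\lceil \log_2 n \rceil} \boxtimes K_\omega$. -/

import Mathlib

open Set

/-- `v` is a `B_d`-ancestor of `w` in the complete binary search tree on
`{1, …, 2^(d+1)-1}`: the descendants of `v = a·2^s` (`a` odd) are exactly the
integers in the open interval `(v - 2^s, v + 2^s)`. -/
def bstAnc (v w : ℕ) : Prop :=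
  v - 2 ^ (padicValNat 2 v) < w ∧ w < v + 2 ^ (padicValNat 2 v)

/-- The closure `C_d` of the complete binary search tree `B_d` on
`{1, …, 2^(d+1)-1}`: two distinct nodes are adjacent iff one is an ancestor
of the other. -/
def closureGraph (d : ℕ) : SimpleGraph {v : ℕ // 1 ≤ v ∧ v ≤ 2 ^ (d + 1) - 1} where
  Adj v w := v ≠ w ∧ (bstAnc v.val w.val ∨ bstAnc w.val v.val)
  symm := by constructor; rintro v w ⟨hne, h⟩; exact ⟨Ne.symm hne, h.symm⟩
  loopless := by constructor; rintro v ⟨hne, -⟩; exact hne rfl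

/-- The strong product of two simple graphs. -/
def strongProd {α β : Type*} (A : SimpleGraph α) (B : SimpleGraph β) :
    SimpleGraph (α × β) where
  Adj p q := p ≠ q ∧ (p.1 = q.1 ∨ A.Adj p.1 q.1) ∧ (p.2 = q.2 ∨ B.Adj p.2 q.2)
  symm := by
    constructor
    rintro ⟨x₁, y₁⟩ ⟨x₂, y₂⟩ ⟨hne, h1, h2⟩
    exact ⟨Ne.symm hne, h1.imp Eq.symm A.adj_symm, h2.imp Eq.symm B.adj_symm⟩
  loopless := by constructor; rintro p ⟨hne, -, -⟩; exact hne rfl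

/-- `H` is isomorphic to a (not necessarily induced) subgraph of `G`. -/
def CopyIn {γ δ : Type*} (H : SimpleGraph γ) (G : SimpleGraph δ) : Prop :=
  ∃ f : γ → δ, Function.Injective f ∧ ∀ a b, H.Adj a b → G.Adj (f a) (f b)

/-- `G` is an interval graph, witnessed by closed intervals `[a v, b v]`. -/
def IsIntervalGraph {V : Type*} (G : SimpleGraph V) : Prop :=
  ∃ a b : V → ℝ, (∀ v, a v ≤ b v) ∧
    ∀ v w, G.Adj v w ↔ v ≠ w ∧ (Icc (a v) (b v) ∩ Icc (a w) (b w)).Nonempty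

/-- Every `n`-vertex interval graph with clique number at most `ω` is isomorphic to
a subgraph of `C_⌈log₂ n⌉ ⊠ K_ω`. -/

private lemma val_odd_part {t : ℕ} (ht : t ≠ 0) :
    ∃ k : ℕ, t = 2 ^ padicValNat 2 t * (2 * k + 1) := by
  haveI : Fact (Nat.Prime 2) := ⟨Nat.prime_two⟩
  obtain ⟨c, hc⟩ : (2:ℕ) ^ padicValNat 2 t ∣ t := pow_padicValNat_dvd
  rcases Nat.even_or_odd c with he | ho
  · exfalso
    obtain ⟨k, hk⟩ := he
    refine pow_succ_padicValNat_not_dvd (p := 2) ht ⟨k, ?_⟩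
    conv_lhs => rw [hc, hk]
    rw [pow_succ]; ring
  · obtain ⟨k, hk⟩ := ho
    refine ⟨k, ?_⟩
    conv_lhs => rw [hc, hk]

private lemma val_add_pow {t : ℕ} (ht : t ≠ 0) :
    padicValNat 2 t + 1 ≤ padicValNat 2 (t + 2 ^ padicValNat 2 t) := by
  haveI : Fact (Nat.Prime 2) := ⟨Nat.prime_two⟩
  obtain ⟨k, hk⟩ := val_odd_part ht
  have hne : t + 2 ^ padicValNat 2 t ≠ 0 := by positivity
  rw [← padicValNat_dvd_iff_le hne, pow_succ]
  generalize (2:ℕ) ^ padicValNat 2 t = P at hk ⊢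
  subst hk
  exact ⟨k + 1, by ring⟩

private lemma val_sub_pow {t : ℕ} (ht : t ≠ 0) (h : 2 ^ padicValNat 2 t < t) :
    padicValNat 2 t + 1 ≤ padicValNat 2 (t - 2 ^ padicValNat 2 t) := by
  haveI : Fact (Nat.Prime 2) := ⟨Nat.prime_two⟩
  obtain ⟨k, hk⟩ := val_odd_part ht
  have hne : t - 2 ^ padicValNat 2 t ≠ 0 := by omega
  rw [← padicValNat_dvd_iff_le hne, pow_succ]
  generalize (2:ℕ) ^ padicValNat 2 t = P at hk ⊢
  subst hk
  refine ⟨k, ?_⟩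
  have h1 : P * (2 * k + 1) = P * 2 * k + P := by ring
  omega

private lemma claimA {t₁ t₂ : ℕ} (h1 : 1 ≤ t₁) (h2 : 1 ≤ t₂)
    (hs : padicValNat 2 t₂ ≤ padicValNat 2 t₁)
    (hb : ∀ y, ((t₁ ≤ y ∧ y ≤ t₂) ∨ (t₂ ≤ y ∧ y ≤ t₁)) →
        padicValNat 2 y ≤ padicValNat 2 t₁ ∨ padicValNat 2 y ≤ padicValNat 2 t₂)
    (hlt : t₁ < t₂) : t₂ < t₁ + 2 ^ padicValNat 2 t₁ := by
  by_contra hcon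
  push_neg at hcon
  have hp : 1 ≤ 2 ^ padicValNat 2 t₁ := Nat.one_le_two_pow
  have hv := val_add_pow (t := t₁) (by omega)
  rcases hb (t₁ + 2 ^ padicValNat 2 t₁) (Or.inl ⟨Nat.le_add_right _ _, hcon⟩) with h | h <;> omega

private lemma claimB {t₁ t₂ : ℕ} (h1 : 1 ≤ t₁) (h2 : 1 ≤ t₂)
    (hs : padicValNat 2 t₂ ≤ padicValNat 2 t₁)
    (hb : ∀ y, ((t₁ ≤ y ∧ y ≤ t₂) ∨ (t₂ ≤ y ∧ y ≤ t₁)) →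
        padicValNat 2 y ≤ padicValNat 2 t₁ ∨ padicValNat 2 y ≤ padicValNat 2 t₂)
    (hlt : t₂ < t₁) : t₁ - 2 ^ padicValNat 2 t₁ < t₂ := by
  by_contra hcon
  push_neg at hcon
  have hp : 1 ≤ 2 ^ padicValNat 2 t₁ := Nat.one_le_two_pow
  have hdvd : 2 ^ padicValNat 2 t₁ ≤ t₁ := Nat.le_of_dvd (by omega) pow_padicValNat_dvd
  have hlt2 : 2 ^ padicValNat 2 t₁ < t₁ := by omega
  have hv := val_sub_pow (t := t₁) (by omega) hlt2
  rcases hb (t₁ - 2 ^ padicValNat 2 t₁) (Or.inr ⟨hcon, Nat.sub_le _ _⟩) with h | h <;> omega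

private lemma keyLemma {l₁ m₁ l₂ m₂ t₁ t₂ x : ℕ} (h1 : 1 ≤ l₁) (h2 : 1 ≤ l₂)
    (ht₁ : l₁ ≤ t₁) (ht₁' : t₁ ≤ m₁) (ht₂ : l₂ ≤ t₂) (ht₂' : t₂ ≤ m₂)
    (hmax₁ : ∀ y, l₁ ≤ y → y ≤ m₁ → padicValNat 2 y ≤ padicValNat 2 t₁)
    (hmax₂ : ∀ y, l₂ ≤ y → y ≤ m₂ → padicValNat 2 y ≤ padicValNat 2 t₂)
    (hx₁ : l₁ ≤ x) (hx₁' : x ≤ m₁) (hx₂ : l₂ ≤ x) (hx₂' : x ≤ m₂)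
    (hne : t₁ ≠ t₂) : bstAnc t₁ t₂ ∨ bstAnc t₂ t₁ := by
  have hb : ∀ y, ((t₁ ≤ y ∧ y ≤ t₂) ∨ (t₂ ≤ y ∧ y ≤ t₁)) →
      padicValNat 2 y ≤ padicValNat 2 t₁ ∨ padicValNat 2 y ≤ padicValNat 2 t₂ := by
    intro y hy
    have hmem : (l₁ ≤ y ∧ y ≤ m₁) ∨ (l₂ ≤ y ∧ y ≤ m₂) := by omega
    rcases hmem with ⟨hA, hB⟩ | ⟨hA, hB⟩
    · exact Or.inl (hmax₁ y hA hB)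
    · exact Or.inr (hmax₂ y hA hB)
  have hb' : ∀ y, ((t₂ ≤ y ∧ y ≤ t₁) ∨ (t₁ ≤ y ∧ y ≤ t₂)) →
      padicValNat 2 y ≤ padicValNat 2 t₂ ∨ padicValNat 2 y ≤ padicValNat 2 t₁ :=
    fun y hy => (hb y hy.symm).symm
  have h1' : 1 ≤ t₁ := le_trans h1 ht₁
  have h2' : 1 ≤ t₂ := le_trans h2 ht₂
  have hp1 : 1 ≤ 2 ^ padicValNat 2 t₁ := Nat.one_le_two_pow
  have hp2 : 1 ≤ 2 ^ padicValNat 2 t₂ := Nat.one_le_two_pow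
  rcases le_total (padicValNat 2 t₂) (padicValNat 2 t₁) with hs | hs
  · left
    rcases Nat.lt_or_ge t₁ t₂ with hlt | hge
    · exact ⟨by omega, claimA h1' h2' hs hb hlt⟩
    · have hlt : t₂ < t₁ := by omega
      exact ⟨claimB h1' h2' hs hb hlt, by omega⟩
  · right
    rcases Nat.lt_or_ge t₂ t₁ with hlt | hge
    · exact ⟨by omega, claimA h2' h1' hs hb' hlt⟩
    · have hlt : t₁ < t₂ := by omega
      exact ⟨claimB h2' h1' hs hb' hlt, by omega⟩

theorem stmt3 (n ω : ℕ) (hn : 1 ≤ n) (hω : 1 ≤ ω)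
    (G : SimpleGraph (Fin n)) (hint : IsIntervalGraph G)
    (hclique : ∀ s : Finset (Fin n), G.IsClique ↑s → s.card ≤ ω) :
    CopyIn G (strongProd (closureGraph (Nat.clog 2 n)) (⊤ : SimpleGraph (Fin ω))) := by
  classical
  obtain ⟨a, b, hab, hadj⟩ := hint
  set d := Nat.clog 2 n with hd
  set σ : Equiv.Perm (Fin n) := Tuple.sort a with hσ
  set ℓ : Fin n → ℕ := fun v => (σ.symm v : ℕ) + 1 with hℓ
  have hℓ1 : ∀ v, 1 ≤ ℓ v := fun v => Nat.succ_le_succ (Nat.zero_le _)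
  have hℓn : ∀ v, ℓ v ≤ n := fun v => Nat.succ_le_of_lt (σ.symm v).isLt
  have hℓa : ∀ p q, ℓ p ≤ ℓ q → a p ≤ a q := by
    intro p q h
    have h' : σ.symm p ≤ σ.symm q := by
      rw [Fin.le_def]
      simp only [hℓ] at h
      omega
    have hm := Tuple.monotone_sort a h'
    simpa [hσ] using hm
  -- the right end of the rank interval
  set N : Fin n → Finset (Fin n) := fun v => Finset.univ.filter (fun w => w = v ∨ G.Adj v w)
    with hN
  have hNne : ∀ v, (N v).Nonempty := fun v => ⟨v, by simp [hN]⟩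
  set m : Fin n → ℕ := fun v => (N v).sup ℓ with hm
  have hm_self : ∀ v, ℓ v ≤ m v := fun v => Finset.le_sup (by simp [hN])
  have hm_adj : ∀ v w, G.Adj v w → ℓ w ≤ m v := fun v w h =>
    Finset.le_sup (by simp [hN, h])
  have hm_le : ∀ v, m v ≤ n := fun v => Finset.sup_le (fun w _ => hℓn w)
  have hm_attain : ∀ v, ∃ w, (w = v ∨ G.Adj v w) ∧ m v ≤ ℓ w := by
    intro v
    obtain ⟨w, hw, hw'⟩ := Finset.exists_mem_eq_sup (N v) (hNne v) ℓ
    refine ⟨w, ?_, le_of_eq hw'⟩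
    simpa [hN] using hw
  -- the tree node: point of maximal 2-adic valuation in [ℓ v, m v]
  have hIt : ∀ v : Fin n, ∃ t, (ℓ v ≤ t ∧ t ≤ m v) ∧
      ∀ y, ℓ v ≤ y → y ≤ m v → padicValNat 2 y ≤ padicValNat 2 t := by
    intro v
    obtain ⟨t, ht, hmax⟩ := Finset.exists_max_image (Finset.Icc (ℓ v) (m v))
      (padicValNat 2) ⟨ℓ v, by simp [hm_self v]⟩
    rw [Finset.mem_Icc] at ht
    exact ⟨t, ht, fun y h1 h2 => hmax y (Finset.mem_Icc.mpr ⟨h1, h2⟩)⟩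
  choose t ht htmax using hIt
  have ht1 : ∀ v, ℓ v ≤ t v := fun v => (ht v).1
  have ht2 : ∀ v, t v ≤ m v := fun v => (ht v).2
  have htpos : ∀ v, 1 ≤ t v := fun v => le_trans (hℓ1 v) (ht1 v)
  have htbound : ∀ v, t v ≤ 2 ^ (d + 1) - 1 := by
    intro v
    have h1 : t v ≤ n := le_trans (ht2 v) (hm_le v)
    have h2 : n ≤ 2 ^ d := Nat.le_pow_clog one_lt_two n
    have h3 : 1 ≤ 2 ^ d := Nat.one_le_two_pow
    have h4 : 2 ^ (d + 1) = 2 * 2 ^ d := by rw [pow_succ]; ring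
    omega
  -- vertices with the same tree node form a clique
  have hsame' : ∀ u v, t u = t v → u ≠ v → ℓ u ≤ ℓ v → G.Adj u v := by
    intro u v htuv hne hle
    rw [hadj]
    refine ⟨hne, ⟨a v, ?_, ?_⟩⟩
    · rw [mem_Icc]
      refine ⟨hℓa u v hle, ?_⟩
      -- a v ≤ b u
      obtain ⟨w, hw, hw'⟩ := hm_attain u
      have hlw : ℓ v ≤ ℓ w := by
        have : ℓ v ≤ m u := by
          have := ht1 v
          have := ht2 u
          omega
        omega
      have haw : a v ≤ a w := hℓa v w hlw
      rcases hw with rfl | hadjuw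
      · exact le_trans haw (hab _)
      · rw [hadj] at hadjuw
        obtain ⟨-, y, hy1, hy2⟩ := hadjuw
        rw [mem_Icc] at hy1 hy2
        exact le_trans haw (le_trans hy2.1 hy1.2)
    · rw [mem_Icc]
      exact ⟨le_refl _, hab v⟩
  have hsame : ∀ u v, t u = t v → u ≠ v → G.Adj u v := by
    intro u v htuv hne
    rcases le_total (ℓ u) (ℓ v) with h | h
    · exact hsame' u v htuv hne h
    · exact (hsame' v u htuv.symm hne.symm h).symm
  have hcard : ∀ v, (Finset.univ.filter (fun w => t w = t v)).card ≤ ω := by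
    intro v
    apply hclique
    intro p hp q hq hpq
    simp only [Finset.coe_filter, Set.mem_setOf_eq, Finset.mem_univ, true_and] at hp hq
    exact hsame p q (hp.trans hq.symm) hpq
  -- the colour
  set c : Fin n → ℕ := fun v => (Finset.univ.filter (fun w => t w = t v ∧ w < v)).card with hc
  have hcω : ∀ v, c v < ω := by
    intro v
    have hsub : (Finset.univ.filter (fun w => t w = t v ∧ w < v)) ⊆
        (Finset.univ.filter (fun w => t w = t v)) := by
      intro w hw
      simp only [Finset.mem_filter, Finset.mem_univ, true_and] at hw ⊢
      exact hw.1
    have hss := (Finset.ssubset_iff_of_subset hsub).2 ⟨v, by simp, by simp⟩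
    exact lt_of_lt_of_le (Finset.card_lt_card hss) (hcard v)
  have hcmono : ∀ p q, t p = t q → p < q → c p < c q := by
    intro p q htpq hpq
    simp only [hc]
    apply Finset.card_lt_card
    refine (Finset.ssubset_iff_of_subset ?_).2 ⟨p, ?_, ?_⟩
    · intro w hw
      simp only [Finset.mem_filter, Finset.mem_univ, true_and] at hw ⊢
      exact ⟨hw.1.trans htpq, hw.2.trans hpq⟩
    · simp [htpq, hpq]
    · simp
  have hcinj : ∀ p q, t p = t q → c p = c q → p = q := by
    intro p q htpq hcq
    by_contra hne
    rcases lt_or_gt_of_ne hne with h | h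
    · exact absurd hcq (Nat.ne_of_lt (hcmono p q htpq h))
    · exact absurd hcq.symm (Nat.ne_of_lt (hcmono q p htpq.symm h))
  -- the embedding
  set f : Fin n → {v : ℕ // 1 ≤ v ∧ v ≤ 2 ^ (d + 1) - 1} × Fin ω :=
    fun v => (⟨t v, htpos v, htbound v⟩, ⟨c v, hcω v⟩) with hf
  have hfinj : Function.Injective f := by
    intro p q h
    simp only [hf, Prod.mk.injEq, Subtype.mk.injEq, Fin.mk.injEq] at h
    exact hcinj p q h.1 h.2
  refine ⟨f, hfinj, ?_⟩
  intro u v huv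
  have hneuv : u ≠ v := huv.ne
  refine ⟨fun h => hneuv (hfinj h), ?_, ?_⟩
  · by_cases htuv : t u = t v
    · exact Or.inl (Subtype.ext htuv)
    · refine Or.inr ⟨fun h => htuv (congrArg Subtype.val h), ?_⟩
      rcases le_total (ℓ u) (ℓ v) with hle | hle
      · exact keyLemma (hℓ1 u) (hℓ1 v) (ht1 u) (ht2 u) (ht1 v) (ht2 v)
          (htmax u) (htmax v) (le_trans hle le_rfl) (le_trans (le_refl (ℓ v)) (hm_adj u v huv))
          le_rfl (hm_self v) htuv
      · exact (keyLemma (hℓ1 v) (hℓ1 u) (ht1 v) (ht2 v) (ht1 u) (ht2 u)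
          (htmax v) (htmax u) hle (hm_adj v u huv.symm) le_rfl (hm_self u)
          (fun h => htuv h.symm)).symm
  · rcases eq_or_ne ((f u).2) ((f v).2) with h | h
    · exact Or.inl h
    · exact Or.inr h
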